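/- Let D be the n×n matrix of squared pairwise distances of points x_1, ..., x_n in a metric space (with D_{ii} = +∞, so only derangements are feasible), and suppose the points admit a partition into blocks each of size at least 4 with weighted average squared diameter (1/n)∑_j |P_j| diam(P_j)² ≤ c·n^{−α}. Then the minimum over fixed-point-free permutations σ of (1/n)∑_{i=1}^n D_{i,σ(i)} is at most c·n^{−α}; moreover, for any fixed derangement τ, the minimum over derangements σ satisfying σ(i) ≠ τ(i) for all i of (1/n)∑_{i=1}^n D_{i,σ(i)} is also at most c·n^{−α}. -/
import Mathlib

open Finset

lemma hall_perm {n k : ℕ} (B : Fin n → Fin k)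
    (h4 : ∀ j : Fin k, 4 ≤ (Finset.univ.filter (fun i => B i = j)).card)
    (g : Fin n → Fin n) (hg : Function.Injective g) :
    ∃ σ : Equiv.Perm (Fin n), ∀ i, B (σ i) = B i ∧ σ i ≠ i ∧ σ i ≠ g i := by
  classical
  set t : Fin n → Finset (Fin n) :=
    fun i => univ.filter (fun z => B z = B i ∧ z ≠ i ∧ z ≠ g i) with ht
  have hall : ∀ s : Finset (Fin n), s.card ≤ (s.biUnion t).card := by
    intro s
    have hs : s.card = ∑ j : Fin k, (s.filter (fun i => B i = j)).card :=
      Finset.card_eq_sum_card_fiberwise (fun i _ => Finset.mem_univ (B i))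
    have hb : (s.biUnion t).card
        = ∑ j : Fin k, ((s.biUnion t).filter (fun z => B z = j)).card :=
      Finset.card_eq_sum_card_fiberwise (fun i _ => Finset.mem_univ (B i))
    rw [hs, hb]
    apply Finset.sum_le_sum
    intro j _
    set sj := s.filter (fun i => B i = j) with hsj
    set R := (s.biUnion t).filter (fun z => B z = j) with hR
    have htsub : ∀ i ∈ sj, t i ⊆ R := by
      intro i hi z hz
      simp only [ht, mem_filter, mem_univ, true_and] at hz
      have hi' := mem_filter.mp hi
      refine mem_filter.mpr ⟨mem_biUnion.mpr ⟨i, hi'.1, ?_⟩, by rw [hz.1, hi'.2]⟩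
      simp only [ht, mem_filter, mem_univ, true_and]
      exact hz
    by_cases hcard : sj.card ≤ 2
    · rcases sj.eq_empty_or_nonempty with he | ⟨i, hi⟩
      · simp [he]
      · have hBi : B i = j := (mem_filter.mp hi).2
        have hsub : univ.filter (fun z => B z = j) ⊆ t i ∪ {i, g i} := by
          intro z hz
          have hz' : B z = j := (mem_filter.mp hz).2
          by_cases h1 : z = i
          · exact mem_union_right _ (by simp [h1])
          by_cases h2 : z = g i
          · exact mem_union_right _ (by simp [h2])
          · refine mem_union_left _ ?_
            simp only [ht, mem_filter, mem_univ, true_and]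
            exact ⟨by rw [hz', hBi], h1, h2⟩
        have hp : ({i, g i} : Finset (Fin n)).card ≤ 2 :=
          (Finset.card_insert_le _ _).trans (by simp)
        have h1 : 4 ≤ (t i).card + 2 := by
          have := (h4 j).trans ((Finset.card_le_card hsub).trans
            (Finset.card_union_le _ _))
          omega
        have h3 : (t i).card ≤ R.card := Finset.card_le_card (htsub i hi)
        omega
    · push_neg at hcard
      have hblock : univ.filter (fun z => B z = j) ⊆ R := by
        intro z hz
        have hz' : B z = j := (mem_filter.mp hz).2
        by_contra hzR
        have hforall : ∀ i ∈ sj, z = i ∨ z = g i := by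
          intro i hi
          by_contra hne
          push_neg at hne
          refine hzR (htsub i hi ?_)
          simp only [ht, mem_filter, mem_univ, true_and]
          exact ⟨by rw [hz', (mem_filter.mp hi).2], hne.1, hne.2⟩
        have hsub2 : sj ⊆ insert z (univ.filter (fun i => g i = z)) := by
          intro i hi
          rcases hforall i hi with h | h
          · exact mem_insert.mpr (Or.inl h.symm)
          · exact mem_insert_of_mem (mem_filter.mpr ⟨mem_univ _, h.symm⟩)
        have hc1 : (univ.filter (fun i => g i = z)).card ≤ 1 :=
          Finset.card_le_one.mpr (fun a ha b hb => hg (by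
            rw [(mem_filter.mp ha).2, (mem_filter.mp hb).2]))
        have h2 := Finset.card_le_card hsub2
        have h3 := Finset.card_insert_le z (univ.filter (fun i => g i = z))
        omega
      have h1 : sj.card ≤ (univ.filter (fun z => B z = j)).card :=
        Finset.card_le_card (fun i hi => mem_filter.mpr ⟨mem_univ _, (mem_filter.mp hi).2⟩)
      exact h1.trans (Finset.card_le_card hblock)
  obtain ⟨f, hfinj, hf⟩ := (Finset.all_card_le_biUnion_card_iff_exists_injective t).mp hall
  refine ⟨Equiv.ofBijective f (Finite.injective_iff_bijective.mp hfinj), fun i => ?_⟩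
  have := hf i
  simp only [ht, mem_filter, mem_univ, true_and] at this
  exact this

theorem lsap_cost_bound {T : Type*} [MetricSpace T] (n k : ℕ)
    (x : Fin n → T) (B : Fin n → Fin k) (c α : ℝ)
    (h4 : ∀ j : Fin k, 4 ≤ (Finset.univ.filter (fun i => B i = j)).card)
    (havg : (1 / (n : ℝ)) * ∑ j : Fin k,
        ((Finset.univ.filter (fun i => B i = j)).card : ℝ) *
          (Metric.diam (x '' {i | B i = j})) ^ 2 ≤ c * (n : ℝ) ^ (-α)) :
    (∃ σ : Equiv.Perm (Fin n), (∀ i, σ i ≠ i) ∧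
      (1 / (n : ℝ)) * ∑ i, dist (x i) (x (σ i)) ^ 2 ≤ c * (n : ℝ) ^ (-α)) ∧
    (∀ τ : Equiv.Perm (Fin n), (∀ i, τ i ≠ i) →
      ∃ σ : Equiv.Perm (Fin n), (∀ i, σ i ≠ i) ∧ (∀ i, σ i ≠ τ i) ∧
        (1 / (n : ℝ)) * ∑ i, dist (x i) (x (σ i)) ^ 2 ≤ c * (n : ℝ) ^ (-α)) := by
  classical
  have key : ∀ σ : Equiv.Perm (Fin n), (∀ i, B (σ i) = B i) →
      (1 / (n : ℝ)) * ∑ i, dist (x i) (x (σ i)) ^ 2 ≤ c * (n : ℝ) ^ (-α) := by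
    intro σ hσ
    have h1 : ∀ i, dist (x i) (x (σ i)) ^ 2 ≤ (Metric.diam (x '' {k' | B k' = B i})) ^ 2 := by
      intro i
      have hbd : Bornology.IsBounded (x '' {k' | B k' = B i}) :=
        ((Set.toFinite _).image x).isBounded
      have hd : dist (x i) (x (σ i)) ≤ Metric.diam (x '' {k' | B k' = B i}) :=
        Metric.dist_le_diam_of_mem hbd ⟨i, rfl, rfl⟩ ⟨σ i, hσ i, rfl⟩
      exact pow_le_pow_left₀ dist_nonneg hd 2
    have h2 : ∑ i, dist (x i) (x (σ i)) ^ 2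
        ≤ ∑ i : Fin n, (Metric.diam (x '' {k' | B k' = B i})) ^ 2 :=
      Finset.sum_le_sum (fun i _ => h1 i)
    have h3 : ∑ i : Fin n, (Metric.diam (x '' {k' | B k' = B i})) ^ 2
        = ∑ j : Fin k, ((Finset.univ.filter (fun i => B i = j)).card : ℝ) *
            (Metric.diam (x '' {i | B i = j})) ^ 2 := by
      rw [← Finset.sum_fiberwise univ B
        (fun i => (Metric.diam (x '' {k' | B k' = B i})) ^ 2)]
      refine Finset.sum_congr rfl (fun j _ => ?_)
      rw [Finset.sum_congr rfl (fun i hi => by rw [(mem_filter.mp hi).2])]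
      simp [Finset.sum_const, nsmul_eq_mul]
    calc (1 / (n : ℝ)) * ∑ i, dist (x i) (x (σ i)) ^ 2
        ≤ (1 / (n : ℝ)) * ∑ j : Fin k, ((Finset.univ.filter (fun i => B i = j)).card : ℝ) *
            (Metric.diam (x '' {i | B i = j})) ^ 2 := by
          apply mul_le_mul_of_nonneg_left (h2.trans_eq h3) (by positivity)
      _ ≤ c * (n : ℝ) ^ (-α) := havg
  constructor
  · obtain ⟨σ, hσ⟩ := hall_perm B h4 id Function.injective_id
    exact ⟨σ, fun i => (hσ i).2.1, key σ (fun i => (hσ i).1)⟩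
  · intro τ hτ
    obtain ⟨σ, hσ⟩ := hall_perm B h4 τ τ.injective
    exact ⟨σ, fun i => (hσ i).2.1, fun i => (hσ i).2.2, key σ (fun i => (hσ i).1)⟩
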